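/- Let J be an unbounded subinterval of ℝ and g : J → ℝ such that g′ exists and is locally absolutely continuous on J, with second derivative g″ ∈ L^p(J) for some p > 1. If g′ ∈ L^α(J) for some α > 1, then g′ ∈ L^∞(J) and ‖g′‖_{J,∞} ≤ ((α(p−1)+p)/(α^{α(p−1)/(α(p−1)+p)}·(p−1)^{α(p−1)/(α(p−1)+p)}·p^{p/(α(p−1)+p)}))·‖g′‖_{J,α}^{α(p−1)/(α(p−1)+p)}·‖g″‖_{J,p}^{p/(α(p−1)+p)}. -/

import Mathlib

open MeasureTheory Set

/-- Hölder-type bound: the `L¹` norm of `f` on `Icc a b ⊆ J` is controlled by its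
`L^q` norm on `J` times `(b-a)^(1-1/q)`. -/
lemma landau_holder_aux {J : Set ℝ} {a b : ℝ} (hsub : Icc a b ⊆ J) (hab : a < b)
    {f : ℝ → ℝ} {q : ℝ} (hq : 1 < q)
    (hf : MemLp f (ENNReal.ofReal q) (volume.restrict J))
    (hfint : IntegrableOn f (Icc a b)) :
    ∫ t in Icc a b, |f t| ≤
      (eLpNorm f (ENNReal.ofReal q) (volume.restrict J)).toReal * (b - a) ^ (1 - 1/q) := by
  have hq0 : (0:ℝ) < q := lt_trans one_pos hq
  have hmeas : AEStronglyMeasurable f (volume.restrict (Icc a b)) :=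
    hf.aestronglyMeasurable.mono_measure (Measure.restrict_mono hsub le_rfl)
  have h1 : eLpNorm f 1 (volume.restrict (Icc a b)) ≤
      eLpNorm f (ENNReal.ofReal q) (volume.restrict (Icc a b)) *
        (volume.restrict (Icc a b)) univ ^ (1/(1 : ENNReal).toReal - 1/(ENNReal.ofReal q).toReal) :=
    eLpNorm_le_eLpNorm_mul_rpow_measure_univ (ENNReal.one_le_ofReal.2 hq.le) hmeas
  rw [Measure.restrict_apply_univ, Real.volume_Icc] at h1
  have h2 : eLpNorm f (ENNReal.ofReal q) (volume.restrict (Icc a b)) ≤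
      eLpNorm f (ENNReal.ofReal q) (volume.restrict J) :=
    eLpNorm_mono_measure _ (Measure.restrict_mono hsub le_rfl)
  have hexp : (1/(1 : ENNReal).toReal - 1/(ENNReal.ofReal q).toReal) = 1 - 1/q := by
    simp [ENNReal.toReal_ofReal hq0.le]
  rw [hexp] at h1
  have heq : ENNReal.ofReal (∫ t in Icc a b, |f t|) = eLpNorm f 1 (volume.restrict (Icc a b)) := by
    rw [eLpNorm_one_eq_lintegral_enorm, ← ofReal_integral_norm_eq_lintegral_enorm hfint]
    simp [Real.norm_eq_abs]
  have hfin : eLpNorm f (ENNReal.ofReal q) (volume.restrict J) *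
      ENNReal.ofReal (b - a) ^ (1 - 1/q) ≠ ⊤ :=
    ENNReal.mul_ne_top hf.eLpNorm_ne_top
      (ENNReal.rpow_ne_top_of_nonneg (by rw [sub_nonneg, div_le_one hq0]; exact hq.le) ENNReal.ofReal_ne_top)
  have h3 : ENNReal.ofReal (∫ t in Icc a b, |f t|) ≤
      eLpNorm f (ENNReal.ofReal q) (volume.restrict J) * ENNReal.ofReal (b - a) ^ (1 - 1/q) := by
    rw [heq]
    exact le_trans h1 (mul_le_mul_left h2 _)
  have h4 := (ENNReal.ofReal_le_iff_le_toReal hfin).1 h3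
  rwa [ENNReal.toReal_mul, ← ENNReal.toReal_rpow,
    ENNReal.toReal_ofReal (by linarith : (0:ℝ) ≤ b - a)] at h4

/-- **Corollary.** If `g : J → ℝ` (with `J` an unbounded interval) has a derivative `g'` that
is locally absolutely continuous with a.e. derivative `g''`, `g'' ∈ L^p(J)` for some `p > 1`
and `g' ∈ L^α(J)` for some `α > 1`, then `g' ∈ L^∞(J)` and
`‖g'‖_{J,∞} ≤ ((α(p-1)+p)/(α^{α(p-1)/(α(p-1)+p)} (p-1)^{α(p-1)/(α(p-1)+p)} p^{p/(α(p-1)+p)}))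
  ‖g'‖_{J,α}^{α(p-1)/(α(p-1)+p)} ‖g''‖_{J,p}^{p/(α(p-1)+p)}`. -/
theorem landau_alpha_p
    (J : Set ℝ) (hJ : J.OrdConnected) (hJu : ¬ Bornology.IsBounded J)
    (g g' g'' : ℝ → ℝ) (p α : ℝ) (hp : 1 < p) (hα : 1 < α)
    (hderiv : ∀ x ∈ J, HasDerivWithinAt g (g' x) J x)
    (hint : ∀ a ∈ J, ∀ b ∈ J, IntervalIntegrable g'' volume a b)
    (hftc : ∀ a ∈ J, ∀ b ∈ J, g' b - g' a = ∫ t in a..b, g'' t)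
    (hg'' : MemLp g'' (ENNReal.ofReal p) (volume.restrict J))
    (hg'α : MemLp g' (ENNReal.ofReal α) (volume.restrict J)) :
    MemLp g' ⊤ (volume.restrict J) ∧
      (eLpNorm g' ⊤ (volume.restrict J)).toReal ≤
        (α * (p - 1) + p) /
            (α ^ (α * (p - 1) / (α * (p - 1) + p)) *
              (p - 1) ^ (α * (p - 1) / (α * (p - 1) + p)) *
                p ^ (p / (α * (p - 1) + p))) *
          (eLpNorm g' (ENNReal.ofReal α) (volume.restrict J)).toReal ^
              (α * (p - 1) / (α * (p - 1) + p)) *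
            (eLpNorm g'' (ENNReal.ofReal p) (volume.restrict J)).toReal ^
              (p / (α * (p - 1) + p)) := by
  have hp0 : (0:ℝ) < p := by linarith
  have hα0 : (0:ℝ) < α := by linarith
  have hp1 : (0:ℝ) < p - 1 := by linarith
  set A := (eLpNorm g' (ENNReal.ofReal α) (volume.restrict J)).toReal with hA_def
  set B := (eLpNorm g'' (ENNReal.ofReal p) (volume.restrict J)).toReal with hB_def
  set k := α * (p - 1) with hk
  set S := k + p with hS
  have hk0 : (0:ℝ) < k := mul_pos hα0 hp1
  have hS0 : (0:ℝ) < S := by rw [hS]; linarith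
  have hA0 : (0:ℝ) ≤ A := ENNReal.toReal_nonneg
  have hB0 : (0:ℝ) ≤ B := ENNReal.toReal_nonneg
  have hmeasJ : MeasurableSet J := hJ.measurableSet
  -- core estimate on a compact subinterval
  have core : ∀ a b : ℝ, a ∈ J → b ∈ J → a < b → ∀ x ∈ Icc a b,
      |g' x| ≤ A * (b - a) ^ (-(1/α)) + B * (b - a) ^ ((p-1)/p) := by
    intro a b ha hb hab x hx
    have hsub : Icc a b ⊆ J := hJ.out ha hb
    have hh : (0:ℝ) < b - a := sub_pos.2 hab
    have hg''int : IntegrableOn g'' (Icc a b) := by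
      rw [integrableOn_Icc_iff_integrableOn_Ioc]
      exact (hint a ha b hb).1
    set D := ∫ t in Icc a b, |g'' t| with hD_def
    have hosc : ∀ s ∈ Icc a b, ∀ t ∈ Icc a b, |g' s - g' t| ≤ D := by
      intro s hs t ht
      have h1 : g' s - g' t = ∫ u in t..s, g'' u := hftc t (hsub ht) s (hsub hs)
      rw [h1]
      calc |∫ u in t..s, g'' u| ≤ ∫ u in Set.uIoc t s, |g'' u| := by
            simpa [Real.norm_eq_abs] using
              intervalIntegral.norm_integral_le_integral_norm_uIoc
                (a := t) (b := s) (f := g'') (μ := volume)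
        _ ≤ D := by
            refine setIntegral_mono_set hg''int.abs
              (Filter.Eventually.of_forall fun u => abs_nonneg _)
              (HasSubset.Subset.eventuallyLE ?_)
            exact uIoc_subset_uIcc.trans (uIcc_subset_Icc ht hs)
    have hg'meas : AEStronglyMeasurable g' (volume.restrict (Icc a b)) :=
      hg'α.aestronglyMeasurable.mono_measure (Measure.restrict_mono hsub le_rfl)
    have hg'bound : ∀ t ∈ Icc a b, ‖g' t‖ ≤ |g' a| + D := by
      intro t ht
      rw [Real.norm_eq_abs]
      have h1 := hosc t ht a (left_mem_Icc.2 hab.le)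
      have h2 := abs_sub_abs_le_abs_sub (g' t) (g' a)
      linarith
    have hg'int : IntegrableOn g' (Icc a b) := by
      refine Integrable.mono' (integrable_const (|g' a| + D)) hg'meas ?_
      exact (ae_restrict_iff' measurableSet_Icc).2 (Filter.Eventually.of_forall hg'bound)
    have hmuIcc : volume (Icc a b) = ENNReal.ofReal (b - a) := Real.volume_Icc
    have hmuIccR : (volume (Icc a b)).toReal = b - a := by
      rw [hmuIcc, ENNReal.toReal_ofReal hh.le]
    have havg : |g' x| ≤ (b - a)⁻¹ * (∫ t in Icc a b, |g' t|) + D := by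
      have h1 : ∀ t ∈ Icc a b, |g' x| ≤ |g' t| + D := by
        intro t ht
        have h2 := hosc x hx t ht
        have h3 := abs_sub_abs_le_abs_sub (g' x) (g' t)
        linarith
      have h2 := setIntegral_ge_of_const_le (c := |g' x|) measurableSet_Icc
        (by rw [hmuIcc]; exact ENNReal.ofReal_ne_top)
        (fun t ht => (h1 t ht).trans_eq rfl)
        ((hg'int.abs.add (integrable_const D)))
      rw [measureReal_def, hmuIccR,
        integral_add hg'int.abs (integrable_const D), setIntegral_const, measureReal_def, hmuIccR,
        smul_eq_mul] at h2
      have h4 : |g' x| * (b - a) ≤ (∫ t in Icc a b, |g' t|) + (b - a) * D := by rw [smul_eq_mul] at h2; linarith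
      calc |g' x| = |g' x| * (b - a) * (b - a)⁻¹ := by field_simp
        _ ≤ ((∫ t in Icc a b, |g' t|) + (b - a) * D) * (b - a)⁻¹ :=
            mul_le_mul_of_nonneg_right h4 (inv_pos.2 hh).le
        _ = (b - a)⁻¹ * (∫ t in Icc a b, |g' t|) + D := by field_simp
    have hα' := landau_holder_aux hsub hab hα hg'α hg'int
    have hp' := landau_holder_aux hsub hab hp hg'' hg''int
    have hD' : D ≤ B * (b - a) ^ ((p-1)/p) := by
      have : (1 : ℝ) - 1/p = (p-1)/p := by field_simp
      rw [hD_def]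
      calc ∫ t in Icc a b, |g'' t| ≤ B * (b - a) ^ (1 - 1/p) := hp'
        _ = B * (b - a) ^ ((p-1)/p) := by rw [this]
    have hA' : (b - a)⁻¹ * (∫ t in Icc a b, |g' t|) ≤ A * (b - a) ^ (-(1/α)) := by
      have h5 : (b - a)⁻¹ * (b - a) ^ (1 - 1/α) = (b - a) ^ (-(1/α)) := by
        rw [← Real.rpow_neg_one (b - a), ← Real.rpow_add hh]
        congr 1
        ring
      calc (b - a)⁻¹ * (∫ t in Icc a b, |g' t|)
          ≤ (b - a)⁻¹ * (A * (b - a) ^ (1 - 1/α)) :=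
            mul_le_mul_of_nonneg_left hα' (inv_pos.2 hh).le
        _ = A * ((b - a)⁻¹ * (b - a) ^ (1 - 1/α)) := by ring
        _ = A * (b - a) ^ (-(1/α)) := by rw [h5]
    calc |g' x| ≤ (b - a)⁻¹ * (∫ t in Icc a b, |g' t|) + D := havg
      _ ≤ A * (b - a) ^ (-(1/α)) + B * (b - a) ^ ((p-1)/p) := add_le_add hA' hD'
  -- the key bound, valid for every window size h > 0
  have key : ∀ x ∈ J, ∀ h : ℝ, 0 < h →
      |g' x| ≤ A * h ^ (-(1/α)) + B * h ^ ((p-1)/p) := by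
    intro x hx h hh
    rw [isBounded_iff_bddBelow_bddAbove, not_and_or] at hJu
    rcases hJu with hbd | hbd
    · obtain ⟨y, hyJ, hy⟩ := not_bddBelow_iff.1 hbd (x - h)
      have haJ : x - h ∈ J := hJ.out hyJ hx ⟨hy.le, by linarith⟩
      have := core (x - h) x haJ hx (by linarith) x ⟨by linarith, le_rfl⟩
      rwa [sub_sub_cancel] at this
    · obtain ⟨y, hyJ, hy⟩ := not_bddAbove_iff.1 hbd (x + h)
      have hbJ : x + h ∈ J := hJ.out hx hyJ ⟨by linarith, hy.le⟩
      have := core x (x + h) hx hbJ (by linarith) x ⟨le_rfl, by linarith⟩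
      rwa [add_sub_cancel_left] at this
  -- pointwise bound with the optimal constant
  have hαp : α ^ (k/S) * (p-1) ^ (k/S) = k ^ (k/S) := by
    rw [hk, Real.mul_rpow hα0.le hp1.le]
  have hbound : ∀ x ∈ J, |g' x| ≤
      S / (α ^ (k/S) * (p-1) ^ (k/S) * p ^ (p/S)) * A ^ (k/S) * B ^ (p/S) := by
    intro x hx
    rw [hαp]
    rcases eq_or_lt_of_le hA0 with hA | hApos
    · -- A = 0 : the derivative vanishes
      have h0 : |g' x| ≤ 0 := by
        refine le_of_forall_pos_le_add fun ε hε => ?_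
        rcases eq_or_lt_of_le hB0 with hB | hBpos
        · have h1 := key x hx 1 one_pos
          rw [← hA, ← hB] at h1
          simpa using h1.trans (by norm_num; linarith)
        · set h := (ε/B) ^ (p/(p-1)) with hh_def
          have hεB : (0:ℝ) < ε / B := div_pos hε hBpos
          have hhpos : 0 < h := Real.rpow_pos_of_pos hεB _
          have h1 := key x hx h hhpos
          have hcalc : h ^ ((p-1)/p) = ε / B := by
            rw [hh_def, ← Real.rpow_mul hεB.le,
              show p/(p-1) * ((p-1)/p) = 1 by field_simp, Real.rpow_one]
          rw [← hA, hcalc] at h1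
          have : B * (ε / B) = ε := by field_simp
          linarith [h1, this]
      rw [← hA, Real.zero_rpow (by positivity : k/S ≠ 0)]
      simpa using h0
    · rcases eq_or_lt_of_le hB0 with hB | hBpos
      · -- B = 0 : again the bound is 0
        have h0 : |g' x| ≤ 0 := by
          refine le_of_forall_pos_le_add fun ε hε => ?_
          set h := (A/ε) ^ α with hh_def
          have hAε : (0:ℝ) < A / ε := div_pos hApos hε
          have hhpos : 0 < h := Real.rpow_pos_of_pos hAε _
          have h1 := key x hx h hhpos
          have hcalc : h ^ (-(1/α)) = ε / A := by
            rw [hh_def, ← Real.rpow_mul hAε.le,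
              show α * -(1/α) = -1 by field_simp, Real.rpow_neg_one, inv_div]
          rw [← hB, hcalc] at h1
          have : A * (ε / A) = ε := by field_simp
          linarith [h1, this]
        rw [← hB, Real.zero_rpow (by positivity : p/S ≠ 0)]
        simpa using h0
      · -- main case : optimize over h
        set z := p * A / (k * B) with hz_def
        have hzpos : 0 < z := by positivity
        have h1 := key x hx (z ^ (α*p/S)) (Real.rpow_pos_of_pos hzpos _)
        have e1 : (z ^ (α*p/S)) ^ (-(1/α)) = z ^ (-(p/S)) := by
          rw [← Real.rpow_mul hzpos.le]
          congr 1
          field_simp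
        have e2 : (z ^ (α*p/S)) ^ ((p-1)/p) = z ^ (k/S) := by
          rw [← Real.rpow_mul hzpos.le]
          congr 1
          rw [hk]
          field_simp
        rw [e1, e2] at h1
        have hsum : k/S + p/S = 1 := by
          rw [← add_div, ← hS, div_self hS0.ne']
        have hApow : A ^ (k/S) * A ^ (p/S) = A := by
          rw [← Real.rpow_add hApos, hsum, Real.rpow_one]
        have hBpow : B ^ (k/S) * B ^ (p/S) = B := by
          rw [← Real.rpow_add hBpos, hsum, Real.rpow_one]
        have hkpow : k ^ (k/S) * k ^ (p/S) = k := by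
          rw [← Real.rpow_add hk0, hsum, Real.rpow_one]
        have hppow : p ^ (k/S) * p ^ (p/S) = p := by
          rw [← Real.rpow_add hp0, hsum, Real.rpow_one]
        have key1 : z ^ (-(p/S)) = (k*B) ^ (p/S) / (p*A) ^ (p/S) := by
          rw [hz_def, Real.rpow_neg (by positivity),
            Real.div_rpow (by positivity) (by positivity), inv_div]
        have key2 : z ^ (k/S) = (p*A) ^ (k/S) / (k*B) ^ (k/S) := by
          rw [hz_def, Real.div_rpow (by positivity) (by positivity)]
        have t1 : A * z ^ (-(p/S)) =
            k / (k ^ (k/S) * p ^ (p/S)) * A ^ (k/S) * B ^ (p/S) := by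
          rw [key1, Real.mul_rpow hk0.le hB0, Real.mul_rpow hp0.le hA0]
          have hA1 : A ^ (p/S) ≠ 0 := by positivity
          have hk1 : k ^ (k/S) ≠ 0 := by positivity
          have hp1' : p ^ (p/S) ≠ 0 := by positivity
          field_simp
          linear_combination A * hkpow - k * hApow
        have t2 : B * z ^ (k/S) =
            p / (k ^ (k/S) * p ^ (p/S)) * A ^ (k/S) * B ^ (p/S) := by
          rw [key2, Real.mul_rpow hp0.le hA0, Real.mul_rpow hk0.le hB0]
          have hB1 : B ^ (k/S) ≠ 0 := by positivity
          have hk1 : k ^ (k/S) ≠ 0 := by positivity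
          have hp1' : p ^ (p/S) ≠ 0 := by positivity
          field_simp
          linear_combination B * hppow - p * hBpow
        have hfinal : A * z ^ (-(p/S)) + B * z ^ (k/S) =
            S / (k ^ (k/S) * p ^ (p/S)) * A ^ (k/S) * B ^ (p/S) := by
          rw [t1, t2, hS]
          ring
        linarith [h1, hfinal.le]
  -- conclude
  set M := S / (α ^ (k/S) * (p-1) ^ (k/S) * p ^ (p/S)) * A ^ (k/S) * B ^ (p/S) with hM_def
  have hM0 : 0 ≤ M := by positivity
  have hae : ∀ᵐ x ∂(volume.restrict J), ‖g' x‖ ≤ M :=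
    (ae_restrict_iff' hmeasJ).2 (Filter.Eventually.of_forall fun x hx => by
      rw [Real.norm_eq_abs]; exact hbound x hx)
  constructor
  · exact memLp_top_of_bound hg'α.aestronglyMeasurable M hae
  · have h2 := eLpNorm_le_of_ae_bound (p := ⊤) hae
    simp only [ENNReal.toReal_top, inv_zero, ENNReal.rpow_zero, one_mul] at h2
    exact ENNReal.toReal_le_of_le_ofReal hM0 h2
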